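/- Let N ∈ ℕ, δ > 0, F ∈ ℝ^{(N+1)×(N+1)}, L ∈ ℝ^{N+1}, and let Q ∈ ℝ^{(N+1)×(N+1)} be symmetric positive definite with QF + FᵀQ + 2δQ negative definite. Suppose C₀ ≥ 0 and e : [0,∞) → ℝ^{N+1} is continuously differentiable with ė(t) = F e(t) + L ζ(t) for all t ≥ 0, where ζ : [0,∞) → ℝ is continuous and |ζ(t)| ≤ C₀ e^{−δt}. Then there exists M > 0, depending only on N, δ, F, L, Q, such that |e(t)| ≤ M e^{−δt}(|e(0)| + C₀) for all t ≥ 0. -/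

import Mathlib

open Matrix

section auxstmt8

lemma aux_abs_dot_le {k : ℕ} (w v : Fin k → ℝ) : |w ⬝ᵥ v| ≤ (∑ i, |w i|) * ‖v‖ := by
  calc |∑ i, w i * v i| ≤ ∑ i, |w i * v i| := Finset.abs_sum_le_sum_abs _ _
    _ ≤ ∑ i, |w i| * ‖v‖ := by
        refine Finset.sum_le_sum fun i _ => ?_
        rw [abs_mul]
        exact mul_le_mul_of_nonneg_left ((Real.norm_eq_abs _ ▸ norm_le_pi_norm v i)) (abs_nonneg _)
    _ = (∑ i, |w i|) * ‖v‖ := (Finset.sum_mul _ _ _).symm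

lemma aux_quad_upper {k : ℕ} (Q : Matrix (Fin k) (Fin k) ℝ) (v : Fin k → ℝ) :
    Q.mulVec v ⬝ᵥ v ≤ (∑ i, ∑ j, |Q i j|) * ‖v‖ ^ 2 := by
  have h1 : Q.mulVec v ⬝ᵥ v ≤ |Q.mulVec v ⬝ᵥ v| := le_abs_self _
  have h2 : |Q.mulVec v ⬝ᵥ v| ≤ (∑ i, |Q.mulVec v i|) * ‖v‖ := aux_abs_dot_le _ v
  have h3 : ∀ i, |Q.mulVec v i| ≤ (∑ j, |Q i j|) * ‖v‖ := fun i => by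
    simpa [Matrix.mulVec, dotProduct] using aux_abs_dot_le (Q i) v
  have h4 : (∑ i, |Q.mulVec v i|) ≤ ∑ i, (∑ j, |Q i j|) * ‖v‖ :=
    Finset.sum_le_sum fun i _ => h3 i
  have h5 : (∑ i, (∑ j, |Q i j|) * ‖v‖) = (∑ i, ∑ j, |Q i j|) * ‖v‖ := (Finset.sum_mul _ _ _).symm
  have hv : (0:ℝ) ≤ ‖v‖ := norm_nonneg v
  nlinarith [mul_le_mul_of_nonneg_right h4 hv]

lemma aux_posdef_lower {k : ℕ} (P : Matrix (Fin (k+1)) (Fin (k+1)) ℝ) (hP : P.PosDef) :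
    ∃ m > 0, ∀ v : Fin (k+1) → ℝ, m * ‖v‖ ^ 2 ≤ P.mulVec v ⬝ᵥ v := by
  set f : (Fin (k+1) → ℝ) → ℝ := fun v => P.mulVec v ⬝ᵥ v with hf
  have hcont : Continuous f := by
    simp only [hf, Matrix.mulVec, dotProduct]
    fun_prop
  have hcomp : IsCompact (Metric.sphere (0 : Fin (k+1) → ℝ) 1) := isCompact_sphere 0 1
  have hne : (Metric.sphere (0 : Fin (k+1) → ℝ) 1).Nonempty :=
    NormedSpace.sphere_nonempty.2 zero_le_one
  obtain ⟨u0, hu0, hmin⟩ := hcomp.exists_isMinOn hne hcont.continuousOn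
  have hu0n : ‖u0‖ = 1 := by simpa using hu0
  have hu0ne : u0 ≠ 0 := by intro h; rw [h] at hu0n; simp at hu0n
  have hm : 0 < f u0 := by
    have := hP.dotProduct_mulVec_pos hu0ne
    simpa [hf, dotProduct_comm] using this
  refine ⟨f u0, hm, fun v => ?_⟩
  rcases eq_or_ne v 0 with rfl | hv
  · simp [hf]
  · have hn : (0:ℝ) < ‖v‖ := norm_pos_iff.2 hv
    set u := ‖v‖⁻¹ • v with hu
    have hun : ‖u‖ = 1 := norm_smul_inv_norm hv
    have hle : f u0 ≤ f u := hmin (by simpa using hun)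
    have hscale : f v = ‖v‖ ^ 2 * f u := by
      have hvu : v = ‖v‖ • u := by rw [hu, smul_smul, mul_inv_cancel₀ hn.ne', one_smul]
      rw [hf]
      conv_lhs => rw [hvu]
      simp [Matrix.mulVec_smul, smul_dotProduct, dotProduct_smul]
      ring
    show f u0 * ‖v‖ ^ 2 ≤ f v
    rw [hscale]
    have := mul_le_mul_of_nonneg_left hle (sq_nonneg ‖v‖)
    nlinarith

lemma aux_hasDerivAt_quad {k : ℕ} (Q : Matrix (Fin k) (Fin k) ℝ) (e : ℝ → Fin k → ℝ)
    (d : Fin k → ℝ) (t : ℝ) (he : HasDerivAt e d t) :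
    HasDerivAt (fun s => Q.mulVec (e s) ⬝ᵥ e s)
      (Q.mulVec d ⬝ᵥ e t + Q.mulVec (e t) ⬝ᵥ d) t := by
  have hei : ∀ i, HasDerivAt (fun s => e s i) (d i) t := fun i => hasDerivAt_pi.1 he i
  have h1 : ∀ i, HasDerivAt (fun s => Q.mulVec (e s) i) (Q.mulVec d i) t := by
    intro i
    simp only [Matrix.mulVec, dotProduct]
    exact HasDerivAt.fun_sum fun j _ => (hei j).const_mul (Q i j)
  have h2 : ∀ i, HasDerivAt (fun s => Q.mulVec (e s) i * e s i)
      (Q.mulVec d i * e t i + Q.mulVec (e t) i * d i) t := fun i => (h1 i).mul (hei i)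
  have h3 := HasDerivAt.fun_sum fun i (_ : i ∈ Finset.univ) => h2 i
  simpa [dotProduct, Finset.sum_add_distrib] using h3

lemma aux_key {k : ℕ} (δ : ℝ) (Q F : Matrix (Fin k) (Fin k) ℝ) (L v : Fin k → ℝ) (z : ℝ) :
    Q.mulVec (F.mulVec v + z • L) ⬝ᵥ v + Q.mulVec v ⬝ᵥ (F.mulVec v + z • L)
      = -((-(Q * F + Fᵀ * Q + (2 * δ) • Q)).mulVec v ⬝ᵥ v)
        - (2 * δ) * (Q.mulVec v ⬝ᵥ v)
        + z * ((Q.mulVec L + Qᵀ.mulVec L) ⬝ᵥ v) := by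
  have h2 : Q.mulVec v ⬝ᵥ F.mulVec v = (Fᵀ * Q).mulVec v ⬝ᵥ v := by
    rw [Matrix.dotProduct_mulVec, ← Matrix.mulVec_transpose, Matrix.mulVec_mulVec]
  have h3 : Q.mulVec v ⬝ᵥ L = Qᵀ.mulVec L ⬝ᵥ v := by
    rw [dotProduct_comm, Matrix.dotProduct_mulVec, ← Matrix.mulVec_transpose]
  simp only [Matrix.mulVec_add, Matrix.mulVec_smul, add_dotProduct,
    dotProduct_add, smul_dotProduct, dotProduct_smul, smul_eq_mul,
    Matrix.mulVec_mulVec, h2, h3, Matrix.neg_mulVec, Matrix.add_mulVec, neg_dotProduct,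
    Matrix.smul_mulVec]
  ring

end auxstmt8

set_option maxHeartbeats 1000000 in
theorem stmt8 (N : ℕ) (δ : ℝ) (hδ : 0 < δ)
    (F : Matrix (Fin (N + 1)) (Fin (N + 1)) ℝ) (L : Fin (N + 1) → ℝ)
    (Q : Matrix (Fin (N + 1)) (Fin (N + 1)) ℝ) (hQ : Q.PosDef)
    (hLyap : (-(Q * F + Fᵀ * Q + (2 * δ) • Q)).PosDef) :
    ∃ M > 0, ∀ C₀ : ℝ, 0 ≤ C₀ →
      ∀ (e : ℝ → (Fin (N + 1) → ℝ)) (ζ : ℝ → ℝ),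
        ContinuousOn ζ (Set.Ici 0) →
        (∀ t, 0 ≤ t → HasDerivAt e (F.mulVec (e t) + ζ t • L) t) →
        (∀ t, 0 ≤ t → |ζ t| ≤ C₀ * Real.exp (-δ * t)) →
        ∀ t, 0 ≤ t → ‖e t‖ ≤ M * Real.exp (-δ * t) * (‖e 0‖ + C₀) := by
  obtain ⟨εp, hεp, hPlow⟩ := aux_posdef_lower _ hLyap
  obtain ⟨m, hm, hQlow⟩ := aux_posdef_lower _ hQ
  set Λ : ℝ := (∑ i, ∑ j, |Q i j|) + 1 with hΛdef
  have hΛ : 0 < Λ := by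
    have : (0:ℝ) ≤ ∑ i, ∑ j, |Q i j| :=
      Finset.sum_nonneg fun i _ => Finset.sum_nonneg fun j _ => abs_nonneg _
    linarith
  have hQup : ∀ v : Fin (N+1) → ℝ, Q.mulVec v ⬝ᵥ v ≤ Λ * ‖v‖ ^ 2 := by
    intro v
    have := aux_quad_upper Q v
    nlinarith [sq_nonneg ‖v‖]
  set w : Fin (N+1) → ℝ := Q.mulVec L + Qᵀ.mulVec L with hwdef
  set c : ℝ := ∑ i, |w i| with hcdef
  have hc : 0 ≤ c := Finset.sum_nonneg fun i _ => abs_nonneg _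
  set η : ℝ := εp / (2 * Λ) with hηdef
  have hη : 0 < η := by positivity
  set K : ℝ := c ^ 2 / (2 * εp) with hKdef
  have hK : 0 ≤ K := by positivity
  set M : ℝ := Real.sqrt ((Λ + K / η) / m) + 1 with hMdef
  have hKη : 0 ≤ K / η := by positivity
  have hMpos : 0 < M := by positivity
  have hM2 : Λ + K / η ≤ M ^ 2 * m := by
    have hs : Real.sqrt ((Λ + K / η) / m) ^ 2 = (Λ + K / η) / m :=
      Real.sq_sqrt (by positivity)
    have hs2 : (Λ + K / η) / m ≤ M ^ 2 := by
      nlinarith [Real.sqrt_nonneg ((Λ + K / η) / m)]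
    calc Λ + K / η = (Λ + K / η) / m * m := by field_simp
      _ ≤ M ^ 2 * m := by nlinarith
  refine ⟨M, hMpos, ?_⟩
  intro C₀ hC₀ e ζ hζc hde hζ
  set V : ℝ → ℝ := fun s => Q.mulVec (e s) ⬝ᵥ e s with hVdef
  set a : ℝ := 2 * δ + η with hadef
  set h : ℝ → ℝ := fun s => Real.exp (a * s) * V s - K / η * C₀ ^ 2 * Real.exp (η * s)
    with hhdef
  -- derivative of V
  have hVd : ∀ t, 0 ≤ t → HasDerivAt V
      (Q.mulVec (F.mulVec (e t) + ζ t • L) ⬝ᵥ e t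
        + Q.mulVec (e t) ⬝ᵥ (F.mulVec (e t) + ζ t • L)) t :=
    fun t ht => aux_hasDerivAt_quad Q e _ t (hde t ht)
  -- bound on derivative of V
  have hDb : ∀ t, 0 ≤ t →
      Q.mulVec (F.mulVec (e t) + ζ t • L) ⬝ᵥ e t
        + Q.mulVec (e t) ⬝ᵥ (F.mulVec (e t) + ζ t • L)
      ≤ -a * V t + K * C₀ ^ 2 * Real.exp (-δ * t) ^ 2 := by
    intro t ht
    rw [aux_key δ Q F L (e t) (ζ t)]
    have hP := hPlow (e t)
    have hVup := hQup (e t)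
    have hcross : ζ t * (w ⬝ᵥ e t) ≤ |ζ t| * (c * ‖e t‖) := by
      calc ζ t * (w ⬝ᵥ e t) ≤ |ζ t * (w ⬝ᵥ e t)| := le_abs_self _
        _ = |ζ t| * |w ⬝ᵥ e t| := abs_mul _ _
        _ ≤ |ζ t| * (c * ‖e t‖) :=
            mul_le_mul_of_nonneg_left (aux_abs_dot_le w (e t)) (abs_nonneg _)
    have hK2 : K * (2 * εp) = c ^ 2 := by rw [hKdef]; field_simp
    have hyoung : |ζ t| * (c * ‖e t‖) ≤ εp / 2 * ‖e t‖ ^ 2 + K * ζ t ^ 2 := by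
      nlinarith [sq_nonneg (εp * ‖e t‖ - c * |ζ t|), sq_abs (ζ t), hεp]
    have hζ2 : ζ t ^ 2 ≤ C₀ ^ 2 * Real.exp (-δ * t) ^ 2 := by
      have h1 := hζ t ht
      nlinarith [abs_nonneg (ζ t), sq_abs (ζ t)]
    have hKζ : K * ζ t ^ 2 ≤ K * (C₀ ^ 2 * Real.exp (-δ * t) ^ 2) :=
      mul_le_mul_of_nonneg_left hζ2 hK
    have hηΛ : η * Λ = εp / 2 := by rw [hηdef]; field_simp
    have hVle : η * V t ≤ εp / 2 * ‖e t‖ ^ 2 := by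
      calc η * V t ≤ η * (Λ * ‖e t‖ ^ 2) := mul_le_mul_of_nonneg_left hVup hη.le
        _ = εp / 2 * ‖e t‖ ^ 2 := by rw [← hηΛ]; ring
    have hVQ : Q.mulVec (e t) ⬝ᵥ e t = V t := rfl
    rw [hVQ, hadef]
    linarith [hcross, hyoung, hKζ, hP, hVle]
  -- derivative of h
  have hh : ∀ t, 0 ≤ t → HasDerivAt h
      (Real.exp (a * t) * a * V t
        + Real.exp (a * t) * (Q.mulVec (F.mulVec (e t) + ζ t • L) ⬝ᵥ e t
            + Q.mulVec (e t) ⬝ᵥ (F.mulVec (e t) + ζ t • L))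
        - K / η * C₀ ^ 2 * (Real.exp (η * t) * η)) t := by
    intro t ht
    have hexp : HasDerivAt (fun s => Real.exp (a * s)) (Real.exp (a * t) * a) t := by
      simpa using (HasDerivAt.exp ((hasDerivAt_id t).const_mul a))
    have hexpη : HasDerivAt (fun s => Real.exp (η * s)) (Real.exp (η * t) * η) t := by
      simpa using (HasDerivAt.exp ((hasDerivAt_id t).const_mul η))
    exact (hexp.mul (hVd t ht)).sub (hexpη.const_mul (K / η * C₀ ^ 2))
  -- exp identity
  have hee : ∀ t : ℝ, Real.exp (a * t) * Real.exp (-δ * t) ^ 2 = Real.exp (η * t) := by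
    intro t
    rw [sq, ← Real.exp_add, ← Real.exp_add, hadef]
    congr 1; ring
  -- h is antitone on [0, ∞)
  have hmono : AntitoneOn h (Set.Ici 0) := by
    apply antitoneOn_of_deriv_nonpos (convex_Ici 0)
    · exact fun t ht => ((hh t ht).continuousAt).continuousWithinAt
    · rw [interior_Ici]
      exact fun t ht => ((hh t ht.le).differentiableAt).differentiableWithinAt
    · rw [interior_Ici]
      intro t ht
      rw [(hh t ht.le).deriv]
      have hb := hDb t ht.le
      have hmul := mul_le_mul_of_nonneg_left hb (Real.exp_pos (a * t)).le
      have heq1 : Real.exp (a * t) * (-a * V t + K * C₀ ^ 2 * Real.exp (-δ * t) ^ 2)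
          = -(Real.exp (a * t) * a * V t) + K * C₀ ^ 2 * Real.exp (η * t) := by
        rw [← hee t]; ring
      have heq2 : K / η * C₀ ^ 2 * (Real.exp (η * t) * η) = K * C₀ ^ 2 * Real.exp (η * t) := by
        field_simp
      rw [heq2]
      linarith [hmul, heq1.symm.le, heq1.le]
  -- conclusion
  intro t ht
  have hht : h t ≤ h 0 := hmono (Set.self_mem_Ici) (Set.mem_Ici.2 ht) ht
  have hh0 : h 0 = V 0 - K / η * C₀ ^ 2 := by simp [hhdef]
  have hV0up : V 0 ≤ Λ * ‖e 0‖ ^ 2 := hQup (e 0)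
  have hexpη1 : 1 ≤ Real.exp (η * t) := Real.one_le_exp (by positivity)
  have hV0nn : 0 ≤ V 0 := le_trans (by positivity) (hQlow (e 0))
  have hKC : 0 ≤ K / η * C₀ ^ 2 := by positivity
  clear_value h V a M K η c w Λ
  have key2 : Real.exp (a * t) * V t
      ≤ Real.exp (η * t) * (Λ * ‖e 0‖ ^ 2 + K / η * C₀ ^ 2) := by
    have h1 : Real.exp (a * t) * V t
        = h t + K / η * C₀ ^ 2 * Real.exp (η * t) := by simp only [hhdef]; ring
    have h2 : Λ * ‖e 0‖ ^ 2 ≤ Λ * ‖e 0‖ ^ 2 * Real.exp (η * t) :=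
      le_mul_of_one_le_right (by positivity) hexpη1
    calc Real.exp (a * t) * V t = h t + K / η * C₀ ^ 2 * Real.exp (η * t) := h1
      _ ≤ h 0 + K / η * C₀ ^ 2 * Real.exp (η * t) := by linarith
      _ = V 0 - K / η * C₀ ^ 2 + K / η * C₀ ^ 2 * Real.exp (η * t) := by rw [hh0]
      _ ≤ Λ * ‖e 0‖ ^ 2 * Real.exp (η * t) + K / η * C₀ ^ 2 * Real.exp (η * t) := by
          linarith [hV0up.trans h2]
      _ = Real.exp (η * t) * (Λ * ‖e 0‖ ^ 2 + K / η * C₀ ^ 2) := by ring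
  set S : ℝ := Λ * ‖e 0‖ ^ 2 + K / η * C₀ ^ 2 with hSdef
  have hVt : V t ≤ Real.exp (-δ * t) ^ 2 * S := by
    have h3 := mul_le_mul_of_nonneg_left key2 (Real.exp_pos (-(a * t))).le
    have h4 : Real.exp (-(a * t)) * (Real.exp (a * t) * V t) = V t := by
      rw [← mul_assoc, ← Real.exp_add]; simp
    have h5 : Real.exp (-(a * t)) * Real.exp (η * t) = Real.exp (-δ * t) ^ 2 := by
      rw [sq, ← Real.exp_add, ← Real.exp_add, hadef]; congr 1; ring
    rw [h4, ← mul_assoc, h5] at h3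
    exact h3
  -- from quadratic bounds to the norm bound
  have hlow : m * ‖e t‖ ^ 2 ≤ V t := by rw [hVdef]; exact hQlow (e t)
  have hSle : S ≤ M ^ 2 * m * (‖e 0‖ + C₀) ^ 2 := by
    have ha0 : (0:ℝ) ≤ ‖e 0‖ := norm_nonneg _
    have hMm := mul_le_mul_of_nonneg_right hM2 (sq_nonneg (‖e 0‖ + C₀))
    have hKη' : 0 ≤ K / η := hKη
    rw [hSdef]
    nlinarith [mul_nonneg hΛ.le (mul_nonneg ha0 hC₀), mul_nonneg hKη' (mul_nonneg ha0 hC₀),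
      mul_nonneg hΛ.le (sq_nonneg C₀), mul_nonneg hKη' (sq_nonneg ‖e 0‖)]
  have hsq : ‖e t‖ ^ 2 ≤ (M * Real.exp (-δ * t) * (‖e 0‖ + C₀)) ^ 2 := by
    have h6 : Real.exp (-δ * t) ^ 2 * S
        ≤ Real.exp (-δ * t) ^ 2 * (M ^ 2 * m * (‖e 0‖ + C₀) ^ 2) :=
      mul_le_mul_of_nonneg_left hSle (sq_nonneg _)
    have h7 : m * ‖e t‖ ^ 2 ≤ m * (M * Real.exp (-δ * t) * (‖e 0‖ + C₀)) ^ 2 := by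
      have h8 : Real.exp (-δ * t) ^ 2 * (M ^ 2 * m * (‖e 0‖ + C₀) ^ 2)
          = m * (M * Real.exp (-δ * t) * (‖e 0‖ + C₀)) ^ 2 := by ring
      linarith [hlow.trans (hVt.trans h6), h8.le]
    exact le_of_mul_le_mul_left h7 hm
  have hrhs : 0 ≤ M * Real.exp (-δ * t) * (‖e 0‖ + C₀) :=
    mul_nonneg (mul_nonneg hMpos.le (Real.exp_pos _).le) (add_nonneg (norm_nonneg _) hC₀)
  have := Real.sqrt_le_sqrt hsq
  rwa [Real.sqrt_sq (norm_nonneg _), Real.sqrt_sq hrhs] at this
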